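/- Let P̂ ∈ Δ_J and r ∈ ℝ_+^J, and set p̂_j^l := max(0, p̂_j − r_j), p̂_j^u := min(1, p̂_j + r_j), L := Σ_{k=1}^J p̂_k^l and U := Σ_{k=1}^J p̂_k^u. Assume L ∈ (0,1), U > 1, and that the ambiguity set 𝔓 := {Q ∈ Δ_J : p̂_j^l ≤ q_j ≤ p̂_j^u for all j} is nonempty. Define the probability vectors P^l with p_j^l := p̂_j^l / L and P^{u−l} with p_j^{u−l} := (p̂_j^u − p̂_j^l)/(U − L). Then for every function h : Ξ → ℝ, sup_{Q ∈ 𝔓} E_Q[h] = L · E_{P^l}[h] + (1 − L) · CVaR_{P^{u−l}}^{(U−1)/(U−L)}[h]. -/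

import Mathlib

open Filter Topology

noncomputable section

/-- Expectation of `h` under the probability vector `Q`. -/
def expec {J : ℕ} (Q h : Fin J → ℝ) : ℝ := ∑ j, Q j * h j

/-- Conditional Value-at-Risk at level `υ` of `h` under probability vector `Q`:
`CVaR_Q^υ[h] = inf_{t ∈ ℝ} { t + (1-υ)⁻¹ Σ_j q_j max(h_j - t, 0) }`. -/
def cvar {J : ℕ} (Q : Fin J → ℝ) (υ : ℝ) (h : Fin J → ℝ) : ℝ :=
  ⨅ t : ℝ, (t + (1 - υ)⁻¹ * ∑ j, Q j * max (h j - t) 0)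


lemma weak_dual {J : ℕ} (c s h : Fin J → ℝ) (B t : ℝ)
    (hs0 : ∀ j, 0 ≤ s j) (hsc : ∀ j, s j ≤ c j) (hsum : ∑ j, s j = B) :
    ∑ j, s j * h j ≤ B * t + ∑ j, c j * max (h j - t) 0 := by
  have key : ∀ j, s j * (h j - t) ≤ c j * max (h j - t) 0 := fun j =>
    le_trans (mul_le_mul_of_nonneg_left (le_max_left _ _) (hs0 j))
      (mul_le_mul_of_nonneg_right (hsc j) (le_max_right _ _))
  have : ∑ j, s j * h j = B * t + ∑ j, s j * (h j - t) := by
    rw [← hsum, Finset.sum_mul, ← Finset.sum_add_distrib]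
    exact Finset.sum_congr rfl (fun j _ => by ring)
  rw [this]
  exact (add_le_add_iff_left _).mpr (Finset.sum_le_sum (fun j _ => key j))

lemma strong_dual {J : ℕ} (hJ : 0 < J) (c h : Fin J → ℝ) (hc : ∀ j, 0 ≤ c j)
    (B : ℝ) (hB0 : 0 ≤ B) (hBc : B ≤ ∑ j, c j) :
    ∃ s : Fin J → ℝ, ∃ t : ℝ, (∀ j, 0 ≤ s j) ∧ (∀ j, s j ≤ c j) ∧ (∑ j, s j = B) ∧
      ∑ j, s j * h j = B * t + ∑ j, c j * max (h j - t) 0 := by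
  classical
  have : Nonempty (Fin J) := ⟨⟨0, hJ⟩⟩
  have hne : (Finset.univ : Finset (Fin J)).Nonempty := Finset.univ_nonempty
  set V : Finset ℝ := Finset.image h Finset.univ with hV
  have hVne : V.Nonempty := hne.image h
  set A : ℝ → ℝ := fun v => ∑ j ∈ Finset.univ.filter (fun j => v < h j), c j with hA
  set T : Finset ℝ := V.filter (fun v => A v ≤ B) with hT
  have hTne : T.Nonempty := by
    refine ⟨V.max' hVne, Finset.mem_filter.mpr ⟨V.max'_mem hVne, ?_⟩⟩
    have hemp : Finset.univ.filter (fun j => V.max' hVne < h j) = ∅ := by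
      refine Finset.filter_eq_empty_iff.mpr (fun j _ => ?_)
      exact not_lt.mpr (V.le_max' _ (Finset.mem_image_of_mem h (Finset.mem_univ j)))
    simp only [hA, hemp, Finset.sum_empty]
    exact hB0
  set t : ℝ := T.min' hTne with ht
  have htT : t ∈ T := T.min'_mem hTne
  have hAt : A t ≤ B := (Finset.mem_filter.mp htT).2
  have hSt : B ≤ ∑ j ∈ Finset.univ.filter (fun j => t ≤ h j), c j := by
    by_cases hex : ∃ j, h j < t
    · obtain ⟨j0, hj0⟩ := hex
      set W : Finset ℝ := V.filter (fun v => v < t) with hW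
      have hWne : W.Nonempty :=
        ⟨h j0, Finset.mem_filter.mpr ⟨Finset.mem_image_of_mem h (Finset.mem_univ j0), hj0⟩⟩
      set v' : ℝ := W.max' hWne with hv'
      have hv'W : v' ∈ W := W.max'_mem hWne
      have hv'V : v' ∈ V := (Finset.mem_filter.mp hv'W).1
      have hv't : v' < t := (Finset.mem_filter.mp hv'W).2
      have hv'T : v' ∉ T := fun hmem => absurd (T.min'_le _ hmem) (not_le.mpr hv't)
      have hAv' : B < A v' := by
        by_contra hcon
        exact hv'T (Finset.mem_filter.mpr ⟨hv'V, not_lt.mp hcon⟩)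
      have hfilter : Finset.univ.filter (fun j => v' < h j)
          = Finset.univ.filter (fun j => t ≤ h j) := by
        refine Finset.filter_congr (fun j _ => ?_)
        constructor
        · intro hlt
          by_contra hcon
          have hjW : h j ∈ W := Finset.mem_filter.mpr
            ⟨Finset.mem_image_of_mem h (Finset.mem_univ j), not_le.mp hcon⟩
          exact absurd (W.le_max' _ hjW) (not_le.mpr hlt)
        · intro hle; exact lt_of_lt_of_le hv't hle
      calc B ≤ A v' := le_of_lt hAv'
        _ = _ := by rw [hA]; exact Finset.sum_congr hfilter (fun _ _ => rfl)
    · push_neg at hex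
      have heq : Finset.univ.filter (fun j => t ≤ h j) = Finset.univ :=
        Finset.filter_true_of_mem (fun j _ => hex j)
      rw [heq]; exact hBc
  set M : ℝ := ∑ j ∈ Finset.univ.filter (fun j => h j = t), c j with hM
  have hsplit : ∑ j ∈ Finset.univ.filter (fun j => t ≤ h j), c j = A t + M := by
    rw [hA, hM, ← Finset.sum_union]
    · apply Finset.sum_congr _ (fun _ _ => rfl)
      ext j
      simp only [Finset.mem_union, Finset.mem_filter, Finset.mem_univ, true_and]
      constructor
      · intro hle; rcases lt_or_eq_of_le hle with h1 | h1
        · exact Or.inl h1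
        · exact Or.inr h1.symm
      · rintro (h1 | h1); exacts [le_of_lt h1, le_of_eq h1.symm]
    · rw [Finset.disjoint_left]
      intro j hj1 hj2
      have h1 := (Finset.mem_filter.mp hj1).2
      have h2 := (Finset.mem_filter.mp hj2).2
      exact absurd h2 (ne_of_gt h1)
  have hM0 : 0 ≤ M := Finset.sum_nonneg (fun j _ => hc j)
  set R : ℝ := B - A t with hR
  have hR0 : 0 ≤ R := sub_nonneg.mpr hAt
  have hRM : R ≤ M := by
    have := hSt; rw [hsplit] at this; linarith
  set ρ : ℝ := if M = 0 then 0 else R / M with hρ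
  have hρ0 : 0 ≤ ρ := by
    rw [hρ]; split
    · exact le_refl 0
    · exact div_nonneg hR0 hM0
  have hρ1 : ρ ≤ 1 := by
    rw [hρ]; split
    · exact zero_le_one
    · rename_i hMne
      exact div_le_one_of_le₀ hRM hM0
  have hρM : ρ * M = R := by
    rw [hρ]; split
    · rename_i hM0'
      rw [hM0'] at hRM
      linarith
    · rename_i hMne
      field_simp
  set s : Fin J → ℝ := fun j =>
    (if t < h j then c j else 0) + (if h j = t then ρ * c j else 0) with hs
  refine ⟨s, t, ?_, ?_, ?_, ?_⟩
  · intro j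
    rw [hs]
    have h1 : (0:ℝ) ≤ if t < h j then c j else 0 := by
      split
      · exact hc j
      · exact le_refl 0
    have h2 : (0:ℝ) ≤ if h j = t then ρ * c j else 0 := by
      split
      · exact mul_nonneg hρ0 (hc j)
      · exact le_refl 0
    exact add_nonneg h1 h2
  · intro j
    rw [hs]
    by_cases h1 : t < h j
    · simp [h1, ne_of_gt h1, hc j]
    · by_cases h2 : h j = t
      · simp only [h1, h2, if_true, if_false, zero_add, lt_irrefl]
        nlinarith [hc j]
      · simp [h1, h2, hc j]
  · rw [hs]
    rw [Finset.sum_add_distrib]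
    rw [← Finset.sum_filter, ← Finset.sum_filter]
    have h2 : ∑ j ∈ Finset.univ.filter (fun j => h j = t), ρ * c j = ρ * M := by
      rw [hM, Finset.mul_sum]
    rw [h2, hρM]
    have h3 : ∑ a ∈ Finset.filter (fun a => t < h a) Finset.univ, c a = A t := rfl
    rw [h3, hR]; ring
  · rw [hs]
    have hlhs : ∑ j, ((if t < h j then c j else 0) + (if h j = t then ρ * c j else 0)) * h j
        = (∑ j ∈ Finset.univ.filter (fun j => t < h j), c j * h j) + ρ * M * t := by
      have : ∀ j, ((if t < h j then c j else 0) + (if h j = t then ρ * c j else 0)) * h j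
          = (if t < h j then c j * h j else 0) + (if h j = t then ρ * c j * t else 0) := by
        intro j
        by_cases h1 : t < h j
        · simp [h1, ne_of_gt h1, add_mul]
        · by_cases h2 : h j = t
          · simp [h1, h2]
          · simp [h1, h2]
      rw [Finset.sum_congr rfl (fun j _ => this j), Finset.sum_add_distrib,
        ← Finset.sum_filter, ← Finset.sum_filter]
      have h3 : ρ * M * t = ∑ j ∈ Finset.univ.filter (fun j => h j = t), ρ * c j * t := by
        rw [hM, Finset.mul_sum, Finset.sum_mul]
      rw [h3]
    rw [hlhs, hρM]
    have hrhs : ∑ j, c j * max (h j - t) 0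
        = (∑ j ∈ Finset.univ.filter (fun j => t < h j), c j * h j) - A t * t := by
      have : ∀ j, c j * max (h j - t) 0 = if t < h j then c j * h j - c j * t else 0 := by
        intro j
        by_cases h1 : t < h j
        · rw [if_pos h1, max_eq_left (by linarith)]; ring
        · rw [if_neg h1, max_eq_right (by push_neg at h1; linarith), mul_zero]
      rw [Finset.sum_congr rfl (fun j _ => this j), ← Finset.sum_filter,
        Finset.sum_sub_distrib]
      have h3 : A t * t = ∑ j ∈ Finset.univ.filter (fun j => t < h j), c j * t :=
        Finset.sum_mul _ _ _
      rw [h3]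
    rw [hrhs, hR]; ring

/-- mean–CVaR reformulation of the worst-case expectation over a
box ambiguity set with clipped bounds. -/
theorem worstcase_eq_mean_cvar
    (J : ℕ) (hJ : 2 ≤ J)
    (Phat r : Fin J → ℝ)
    (hPhat : Phat ∈ stdSimplex ℝ (Fin J)) (hr : ∀ j, 0 ≤ r j)
    (L U : ℝ)
    (hLdef : L = ∑ k, max 0 (Phat k - r k))
    (hUdef : U = ∑ k, min 1 (Phat k + r k))
    (hL0 : 0 < L) (hL1 : L < 1) (hU : 1 < U)
    (hne : ({Q | Q ∈ stdSimplex ℝ (Fin J) ∧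
        ∀ j, max 0 (Phat j - r j) ≤ Q j ∧ Q j ≤ min 1 (Phat j + r j)} : Set (Fin J → ℝ)).Nonempty)
    (h : Fin J → ℝ) :
    sSup ((fun Q => expec Q h) ''
        {Q | Q ∈ stdSimplex ℝ (Fin J) ∧
          ∀ j, max 0 (Phat j - r j) ≤ Q j ∧ Q j ≤ min 1 (Phat j + r j)})
      = L * expec (fun j => max 0 (Phat j - r j) / L) h
        + (1 - L) *
          cvar (fun j => (min 1 (Phat j + r j) - max 0 (Phat j - r j)) / (U - L))
            ((U - 1) / (U - L)) h := by
  classical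
  obtain ⟨hP0, hP1⟩ := hPhat
  set pl : Fin J → ℝ := fun j => max 0 (Phat j - r j) with hpl
  set pu : Fin J → ℝ := fun j => min 1 (Phat j + r j) with hpu
  have hP1' : ∀ j, Phat j ≤ 1 := by
    intro j
    calc Phat j ≤ ∑ k, Phat k := Finset.single_le_sum (fun i _ => hP0 i) (Finset.mem_univ j)
      _ = 1 := hP1
  have hpl0 : ∀ j, 0 ≤ pl j := fun j => le_max_left _ _
  have hplu : ∀ j, pl j ≤ pu j := by
    intro j
    refine max_le (le_min zero_le_one (by have := hP0 j; have := hr j; linarith)) ?_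
    refine le_min (by have := hP1' j; have := hr j; linarith) (by have := hr j; linarith)
  have hc : ∀ j, 0 ≤ pu j - pl j := fun j => sub_nonneg.mpr (hplu j)
  have hB0 : (0:ℝ) < 1 - L := by linarith
  have hsumc : ∑ j, (pu j - pl j) = U - L := by
    rw [Finset.sum_sub_distrib, ← hLdef, ← hUdef]
  have hBc : 1 - L ≤ ∑ j, (pu j - pl j) := by rw [hsumc]; linarith
  have hUL : (0:ℝ) < U - L := by linarith
  obtain ⟨s, t, hs0, hsc, hssum, hskey⟩ :=
    strong_dual (by omega : 0 < J) (fun j => pu j - pl j) h hc (1 - L) hB0.le hBc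
  set G : ℝ → ℝ := fun t' => (1 - L) * t' + ∑ j, (pu j - pl j) * max (h j - t') 0 with hG
  have hskey' : ∑ j, s j * h j = G t := hskey
  -- weak duality for any feasible point
  have hweak : ∀ (q : Fin J → ℝ), (∀ j, 0 ≤ q j) → (∀ j, q j ≤ pu j - pl j) →
      (∑ j, q j = 1 - L) → ∀ t', ∑ j, q j * h j ≤ G t' :=
    fun q h1 h2 h3 t' => weak_dual _ q h (1 - L) t' h1 h2 h3
  -- LHS equals V* := ∑ pl h + ∑ s h
  have hLHS : sSup ((fun Q => expec Q h) ''
        {Q | Q ∈ stdSimplex ℝ (Fin J) ∧ ∀ j, pl j ≤ Q j ∧ Q j ≤ pu j})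
      = ∑ j, pl j * h j + ∑ j, s j * h j := by
    apply IsGreatest.csSup_eq
    constructor
    · refine ⟨fun j => pl j + s j, ⟨⟨fun j => add_nonneg (hpl0 j) (hs0 j), ?_⟩, ?_⟩, ?_⟩
      · rw [Finset.sum_add_distrib, ← hLdef, hssum]; ring
      · intro j
        constructor
        · exact le_add_of_nonneg_right (hs0 j)
        · show pl j + s j ≤ pu j
          have := hsc j; linarith
      · show expec _ h = _
        simp only [expec]
        rw [← Finset.sum_add_distrib]
        exact Finset.sum_congr rfl (fun j _ => by ring)
    · rintro x ⟨Q, ⟨⟨hQ0, hQ1⟩, hQb⟩, rfl⟩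
      show expec Q h ≤ _
      have hfeas : ∀ j, 0 ≤ Q j - pl j := fun j => sub_nonneg.mpr (hQb j).1
      have hfeas2 : ∀ j, Q j - pl j ≤ pu j - pl j := fun j => by have := (hQb j).2; linarith
      have hfeas3 : ∑ j, (Q j - pl j) = 1 - L := by
        rw [Finset.sum_sub_distrib, hQ1, ← hLdef]
      have := hweak _ hfeas hfeas2 hfeas3 t
      rw [← hskey'] at this
      have hsplit : expec Q h = ∑ j, pl j * h j + ∑ j, (Q j - pl j) * h j := by
        simp only [expec]
        rw [← Finset.sum_add_distrib]
        exact Finset.sum_congr rfl (fun j _ => by ring)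
      rw [hsplit]
      linarith
  rw [hLHS]
  -- first term of RHS
  have hLne : L ≠ 0 := ne_of_gt hL0
  have hterm1 : L * expec (fun j => pl j / L) h = ∑ j, pl j * h j := by
    simp only [expec]
    rw [Finset.mul_sum]
    refine Finset.sum_congr rfl (fun j _ => ?_)
    field_simp
  -- cvar computation
  have h1υ : (1 - (U - 1) / (U - L)) = (1 - L) / (U - L) := by
    rw [eq_div_iff (ne_of_gt hUL)]
    field_simp
    ring
  have hform : ∀ t' : ℝ,
      (t' + (1 - (U - 1) / (U - L))⁻¹ * ∑ j, (pu j - pl j) / (U - L) * max (h j - t') 0)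
        = G t' / (1 - L) := by
    intro t'
    have hsum : ∑ j, (pu j - pl j) / (U - L) * max (h j - t') 0
        = (∑ j, (pu j - pl j) * max (h j - t') 0) / (U - L) := by
      rw [Finset.sum_div]
      exact Finset.sum_congr rfl (fun j _ => by ring)
    rw [h1υ, hsum]
    show t' + ((1 - L) / (U - L))⁻¹ * ((∑ j, (pu j - pl j) * max (h j - t') 0) / (U - L))
        = ((1 - L) * t' + ∑ j, (pu j - pl j) * max (h j - t') 0) / (1 - L)
    have h1 : (U - L) ≠ 0 := ne_of_gt hUL
    have h2 : (1 - L) ≠ 0 := ne_of_gt hB0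
    field_simp
  have hcvar : cvar (fun j => (pu j - pl j) / (U - L)) ((U - 1) / (U - L)) h
      = G t / (1 - L) := by
    simp only [cvar]
    have hGle : ∀ t', G t ≤ G t' := fun t' => by
      rw [← hskey']; exact hweak s hs0 hsc hssum t'
    apply le_antisymm
    · refine le_trans (ciInf_le ⟨G t / (1 - L), ?_⟩ t) (le_of_eq (hform t))
      rintro x ⟨t', rfl⟩
      dsimp only
      rw [hform t']
      gcongr
      exact hGle t'
    · refine le_ciInf (fun t' => ?_)
      rw [hform t']
      gcongr
      exact hGle t'
  rw [hterm1, hcvar]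
  rw [mul_comm, div_mul_cancel₀ _ (ne_of_gt hB0), hskey']


end
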